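/- arXiv:1705.05036 — 9 statements merged into one kernel-verified Lean document; each statement's English description precedes it below -/
import Mathlib

section
/- Let a > 1 and λ > 1 be real numbers and let g : ℝ → ℝ be an even function, differentiable on the open interval (−a, a), with g((−a,a)) ⊆ (−a,a), satisfying g(x) = −λ·g(g(−x/λ)) for all x ∈ (−a,a). If b ∈ (−a,a) satisfies g(b/λ) = b and g′(b) ≠ 0, then g′(b/λ) = −1. -/
/-- the slope of the renormalization fixed point at `b/λ` is `-1`
whenever `g(b/λ) = b` and `g'(b) ≠ 0`. -/
theorem feigenbaum_slope_at_b2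
    (a lam : ℝ) (ha : 1 < a) (hlam : 1 < lam) (g : ℝ → ℝ)
    (heven : ∀ x : ℝ, g (-x) = g x)
    (hdiff : ∀ x ∈ Set.Ioo (-a) a, DifferentiableAt ℝ g x)
    (hmaps : ∀ x ∈ Set.Ioo (-a) a, g x ∈ Set.Ioo (-a) a)
    (hfe : ∀ x ∈ Set.Ioo (-a) a, g x = -lam * g (g (-x / lam)))
    (b : ℝ) (hb : b ∈ Set.Ioo (-a) a)
    (hgb : g (b / lam) = b) (hdb : deriv g b ≠ 0) :
    deriv g (b / lam) = -1 := by
  have hlam0 : (0:ℝ) < lam := lt_trans one_pos hlam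
  have habs : |b| < a := abs_lt.mpr ⟨hb.1, hb.2⟩
  have hbl : b / lam ∈ Set.Ioo (-a) a := by
    have : |b / lam| < a := by
      rw [abs_div, abs_of_pos hlam0]
      calc |b| / lam ≤ |b| / 1 := by
            apply div_le_div_of_nonneg_left (abs_nonneg b) one_pos hlam.le
        _ = |b| := by ring
        _ < a := habs
    exact ⟨(abs_lt.mp this).1, (abs_lt.mp this).2⟩
  set d := deriv g (b / lam) with hd_def
  set D := deriv g b with hD_def
  have hdbl : DifferentiableAt ℝ g (b / lam) := hdiff _ hbl
  have h1 : HasDerivAt g d (b / lam) := hdbl.hasDerivAt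
  have hneg : HasDerivAt (fun x : ℝ => -x) (-1 : ℝ) (-(b / lam)) := by
    simpa [Pi.neg_def] using (hasDerivAt_id' (-(b / lam))).neg
  have h2 : HasDerivAt (fun x => g (-x)) (d * (-1)) (-(b / lam)) := by
    have := (show HasDerivAt g d (- -(b / lam)) by rw [neg_neg]; exact h1).comp (-(b / lam)) (by simpa using hneg)
    simpa [Function.comp_def] using this
  have hfun : (fun x => g (-x)) = g := funext heven
  have h3 : HasDerivAt g (-d) (-(b / lam)) := by
    rw [hfun] at h2; simpa using h2
  -- inner function x ↦ -x / lam has derivative -(1/lam) at b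
  have hinner : HasDerivAt (fun x : ℝ => -x / lam) (-(1 / lam)) b := by
    simpa [neg_div] using ((hasDerivAt_id b).neg.div_const lam)
  have hval : -b / lam = -(b / lam) := by ring
  have hg1 : HasDerivAt (fun x => g (-x / lam)) (-d * -(1 / lam)) b := by
    have := (hval ▸ h3 : HasDerivAt g (-d) (-b / lam)).comp b hinner
    simpa [mul_comm, Function.comp_def] using this
  have hgval : g (-b / lam) = b := by rw [hval, heven, hgb]
  have hDb : HasDerivAt g D b := (hdiff b hb).hasDerivAt
  have hg2 : HasDerivAt (fun x => g (g (-x / lam))) (D * (-d * -(1 / lam))) b := by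
    have := (show HasDerivAt g D (g (-b / lam)) by rw [hgval]; exact hDb).comp b hg1
    simpa [mul_comm, mul_left_comm, Function.comp_def] using this
  have hg3 : HasDerivAt (fun x => -lam * g (g (-x / lam)))
      (-lam * (D * (-d * -(1 / lam)))) b := hg2.const_mul (-lam)
  have hEq : (fun x => -lam * g (g (-x / lam))) =ᶠ[nhds b] g := by
    filter_upwards [isOpen_Ioo.mem_nhds hb] with x hx
    exact (hfe x hx).symm
  have hg4 : HasDerivAt g (-lam * (D * (-d * -(1 / lam)))) b :=
    hg3.congr_of_eventuallyEq hEq.symm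
  have huniq : D = -lam * (D * (-d * -(1 / lam))) := hDb.unique hg4
  have hlamne : lam ≠ 0 := ne_of_gt hlam0
  have : -lam * (D * (-d * -(1 / lam))) = -(D * d) := by
    field_simp
  rw [this] at huniq
  -- D = -(D * d) with D ≠ 0 gives d = -1
  have : D * (d + 1) = 0 := by linarith [huniq]
  rcases mul_eq_zero.mp this with h | h
  · exact absurd h hdb
  · linarith
end

section
/- Let λ > 1 and let g : ℝ → ℝ be even and three times differentiable with continuous third derivative on an open interval containing [−1,1]. Assume: (a) g has negative Schwarzian derivative on [−1,1], i.e. for every x ∈ [−1,1] with g′(x) ≠ 0 one has g′′′(x)/g′(x) − (3/2)·(g′′(x)/g′(x))² < 0; (b) there are reals b and c with 0 < b < 1/λ < c ≤ 1 such that g′(b) = −1 and g′(c) = −λ; (c) g′(x) ≠ 0 for all x ∈ [b, 1]; and (d) g′(−1) = (g′(1/λ))². Then |g′(1/λ)| > 1 and |g′(x)| ≥ |g′(1/λ)| for every x ∈ [−1,1] with 1/λ ≤ |x| ≤ 1. -/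
/-- the renormalization fixed point `g` is expanding on
`{x ∈ [-1,1] : 1/λ ≤ |x| ≤ 1}`, with expansion constant `|g'(1/λ)| > 1`. -/
theorem feigenbaum_expanding_on_A_and_C
    (lam : ℝ) (hlam : 1 < lam) (g : ℝ → ℝ)
    (heven : ∀ x : ℝ, g (-x) = g x)
    (s t : ℝ) (hs : s < -1) (ht : 1 < t)
    (hsmooth : ContDiffOn ℝ 3 g (Set.Ioo s t))
    (hschwarz : ∀ x ∈ Set.Icc (-1 : ℝ) 1, deriv g x ≠ 0 →
      deriv (deriv (deriv g)) x / deriv g x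
        - (3 / 2) * (deriv (deriv g) x / deriv g x) ^ 2 < 0)
    (b c : ℝ) (hb0 : 0 < b) (hblam : b < 1 / lam) (hlamc : 1 / lam < c)
    (hc1 : c ≤ 1) (hdb : deriv g b = -1) (hdc : deriv g c = -lam)
    (hne : ∀ x ∈ Set.Icc b 1, deriv g x ≠ 0)
    (hrel : deriv g (-1) = (deriv g (1 / lam)) ^ 2) :
    1 < |deriv g (1 / lam)| ∧
      ∀ x ∈ Set.Icc (-1 : ℝ) 1, 1 / lam ≤ |x| → |x| ≤ 1 →
        |deriv g (1 / lam)| ≤ |deriv g x| := by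
  have hlam0 : (0 : ℝ) < lam := lt_trans one_pos hlam
  have hlaminv : (0 : ℝ) < 1 / lam := by positivity
  have hlaminv1 : 1 / lam < 1 := by
    rw [div_lt_one hlam0]; exact hlam
  set g1 := deriv g with hg1def
  set g2 := deriv (deriv g) with hg2def
  set g3 := deriv (deriv (deriv g)) with hg3def
  have hopen : IsOpen (Set.Ioo s t) := isOpen_Ioo
  have hsub : Set.Icc (-1 : ℝ) 1 ⊆ Set.Ioo s t := fun x hx =>
    ⟨lt_of_lt_of_le hs hx.1, lt_of_le_of_lt hx.2 ht⟩
  have hb1sub : Set.Icc b 1 ⊆ Set.Icc (-1 : ℝ) 1 := fun x hx =>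
    ⟨le_trans (by linarith) hx.1, hx.2⟩
  -- smoothness of derivatives
  have hg1smooth : ContDiffOn ℝ 2 g1 (Set.Ioo s t) := by
    have := hsmooth.deriv_of_isOpen hopen (m := 2) (by norm_num)
    exact this
  have hg2smooth : ContDiffOn ℝ 1 g2 (Set.Ioo s t) := by
    have := hg1smooth.deriv_of_isOpen hopen (m := 1) (by norm_num)
    exact this
  have hd1 : ∀ x ∈ Set.Ioo s t, HasDerivAt g1 (g2 x) x := by
    intro x hx
    have : DifferentiableAt ℝ g1 x :=
      ((hg1smooth.differentiableOn (by norm_num)).differentiableAt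
        (hopen.mem_nhds hx))
    exact this.hasDerivAt
  have hd2 : ∀ x ∈ Set.Ioo s t, HasDerivAt g2 (g3 x) x := by
    intro x hx
    have : DifferentiableAt ℝ g2 x :=
      ((hg2smooth.differentiableOn (by norm_num)).differentiableAt
        (hopen.mem_nhds hx))
    exact this.hasDerivAt
  have hg1cont : ContinuousOn g1 (Set.Ioo s t) := hg1smooth.continuousOn
  -- g1 < 0 on [b,1]
  have hneg : ∀ x ∈ Set.Icc b 1, g1 x < 0 := by
    intro x hx
    rcases (hne x hx).lt_or_gt with h | h
    · exact h
    · exfalso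
      have hbx : b ≤ x := hx.1
      have hcont : ContinuousOn g1 (Set.Icc b x) := by
        apply hg1cont.mono
        intro y hy
        exact hsub (hb1sub ⟨hy.1, le_trans hy.2 hx.2⟩)
      have : (0 : ℝ) ∈ Set.Icc (g1 b) (g1 x) := by
        rw [hdb]; constructor <;> linarith
      obtain ⟨z, hz, hz0⟩ := intermediate_value_Icc hbx hcont this
      exact hne z ⟨hz.1, le_trans hz.2 hx.2⟩ hz0
  -- the function w = -(g1)⁻¹
  set w : ℝ → ℝ := fun x => -(g1 x)⁻¹ with hwdef
  have hwcont : ContinuousOn w (Set.Icc b 1) := by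
    apply ContinuousOn.neg
    apply ContinuousOn.inv₀
    · exact hg1cont.mono (fun y hy => hsub (hb1sub hy))
    · exact hne
  -- first derivative of w on Ioo b 1
  have hw1 : ∀ x ∈ Set.Ioo b 1, HasDerivAt w (g2 x / g1 x ^ 2) x := by
    intro x hx
    have hxmem : x ∈ Set.Icc b 1 := Set.mem_Icc_of_Ioo hx
    have hx' : x ∈ Set.Ioo s t := hsub (hb1sub hxmem)
    have h := ((hd1 x hx').inv (hne x hxmem)).neg
    rw [show g2 x / g1 x ^ 2 = -(-g2 x / g1 x ^ 2) by ring]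
    exact h
  -- second derivative of w
  have hw2 : ∀ x ∈ Set.Ioo b 1, 0 < deriv (deriv w) x := by
    intro x hx
    have hxmem : x ∈ Set.Icc b 1 := Set.mem_Icc_of_Ioo hx
    have hx' : x ∈ Set.Ioo s t := hsub (hb1sub hxmem)
    have hne' : g1 x ≠ 0 := hne x hxmem
    have hev : deriv w =ᶠ[nhds x] fun y => g2 y / g1 y ^ 2 := by
      filter_upwards [isOpen_Ioo.mem_nhds hx] with y hy
      exact (hw1 y hy).deriv
    rw [hev.deriv_eq]
    have hden : HasDerivAt (fun y => g1 y ^ 2) (2 * g1 x ^ 1 * g2 x) x := by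
      simpa using (hd1 x hx').fun_pow 2
    have hq : HasDerivAt (fun y => g2 y / g1 y ^ 2)
        ((g3 x * g1 x ^ 2 - g2 x * (2 * g1 x ^ 1 * g2 x)) / (g1 x ^ 2) ^ 2) x :=
      (hd2 x hx').div hden (pow_ne_zero 2 hne')
    rw [hq.deriv]
    have hS := hschwarz x (hb1sub hxmem) hne'
    have hkey : g3 x * g1 x < 3 / 2 * g2 x ^ 2 := by
      have hsq : (0 : ℝ) < g1 x ^ 2 := by positivity
      have h1 := mul_neg_of_neg_of_pos hS hsq
      have h2 : (g3 x / g1 x - 3 / 2 * (g2 x / g1 x) ^ 2) * g1 x ^ 2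
          = g3 x * g1 x - 3 / 2 * g2 x ^ 2 := by
        field_simp
      rw [h2] at h1; linarith
    have hA : g3 x * g1 x - 2 * g2 x ^ 2 < 0 := by nlinarith [sq_nonneg (g2 x)]
    have hN : 0 < g1 x * (g3 x * g1 x - 2 * g2 x ^ 2) :=
      mul_pos_of_neg_of_neg (hneg x hxmem) hA
    apply div_pos _ (by positivity)
    nlinarith [hN]
  -- strict convexity of w on [b,1]
  have hconv : StrictConvexOn ℝ (Set.Icc b 1) w := by
    apply strictConvexOn_of_deriv2_pos (convex_Icc b 1) hwcont
    intro x hx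
    rw [interior_Icc] at hx
    have : deriv^[2] w x = deriv (deriv w) x := by
      simp [Function.iterate_succ, Function.comp]
    rw [this]
    exact hw2 x hx
  -- evenness of g gives oddness of g1
  have hodd : ∀ x : ℝ, g1 (-x) = -g1 x := by
    intro x
    have h1 : (fun y => g (-y)) = g := funext heven
    have := deriv_comp_neg (f := g) (x := x)
    rw [h1] at this
    rw [hg1def]
    linarith [this]
  -- membership facts
  have hlmem : (1 / lam) ∈ Set.Icc b 1 := ⟨le_of_lt hblam, le_of_lt hlaminv1⟩
  have hcmem : c ∈ Set.Icc b 1 := ⟨by linarith, hc1⟩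
  have hbmem : b ∈ Set.Icc b 1 := ⟨le_refl b, by linarith [hb0, hblam, hlaminv1]⟩
  have h1mem : (1 : ℝ) ∈ Set.Icc b 1 := ⟨by linarith [hblam, hlaminv1], le_refl 1⟩
  set mu : ℝ := -g1 (1 / lam) with hmudef
  have hmu0 : 0 < mu := by
    have := hneg _ hlmem
    simp only [hmudef]; linarith
  -- first claim: 1 < mu
  have hmu1 : 1 < mu := by
    have hlt : w (1 / lam) < max (w b) (w c) := by
      apply hconv.lt_on_openSegment hbmem hcmem (ne_of_lt (by linarith : b < c))
      rw [openSegment_eq_Ioo (by linarith : b < c)]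
      exact ⟨hblam, hlamc⟩
    have hwb : w b = 1 := by rw [hwdef]; norm_num [hdb]
    have hwc : w c = 1 / lam := by
      rw [hwdef]; simp only [hdc, inv_neg, neg_neg, one_div]
    rw [hwb, hwc, max_eq_left (le_of_lt hlaminv1)] at hlt
    have hwl : w (1 / lam) = mu⁻¹ := by
      rw [hwdef]; simp only [hmudef, inv_neg, neg_neg]
    rw [hwl] at hlt
    rcases lt_or_ge 1 mu with h | h
    · exact h
    · exfalso
      have h2 : (1:ℝ)⁻¹ ≤ mu⁻¹ := (inv_le_inv₀ one_pos hmu0).mpr h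
      rw [inv_one] at h2
      linarith
  have habsmu : |g1 (1 / lam)| = mu := by
    rw [abs_of_neg (hneg _ hlmem), hmudef]
  constructor
  · rw [habsmu]; exact hmu1
  · intro x hx hx1 hx2
    -- reduce to y = |x| ∈ [1/lam, 1]
    have hymem : |x| ∈ Set.Icc b 1 := ⟨le_trans (le_of_lt hblam) hx1, hx2⟩
    have habs : |g1 x| = |g1 (|x|)| := by
      rcases le_or_gt 0 x with h | h
      · rw [abs_of_nonneg h]
      · rw [abs_of_neg h, hodd x, abs_neg]
    have hwy : w (|x|) ≤ max (w (1 / lam)) (w 1) := by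
      apply hconv.convexOn.le_on_segment hlmem h1mem
      rw [segment_eq_Icc (le_of_lt hlaminv1)]
      exact ⟨hx1, hx2⟩
    have hw1' : w 1 = (mu ^ 2)⁻¹ := by
      have h1 : g1 (-1) = -g1 1 := hodd 1
      have h2 : g1 1 = -mu ^ 2 := by
        rw [h1] at hrel
        simp only [hmudef]
        linear_combination -hrel
      rw [hwdef]; simp only [h2, inv_neg, neg_neg]
    have hwl : w (1 / lam) = mu⁻¹ := by
      rw [hwdef]; simp only [hmudef, inv_neg, neg_neg]
    have hmax : max (w (1 / lam)) (w 1) = mu⁻¹ := by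
      rw [hwl, hw1', max_eq_left]
      apply inv_anti₀ hmu0
      nlinarith [hmu1, hmu0]
    rw [hmax] at hwy
    have hgy : g1 (|x|) < 0 := hneg _ hymem
    have hle : mu ≤ -g1 (|x|) := by
      have hwy' : (-g1 (|x|))⁻¹ ≤ mu⁻¹ := by
        have heq : w (|x|) = (-g1 (|x|))⁻¹ := by
          rw [hwdef]; simp only [inv_neg, neg_neg]
        linarith [heq ▸ hwy]
      have hgy0 : 0 < -g1 (|x|) := by linarith
      exact (inv_le_inv₀ hgy0 hmu0).mp hwy'
    rw [habsmu, habs, abs_of_neg hgy]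
    exact hle
end

section
/- Let a > 1 and λ > 1 be real numbers and let g : ℝ → ℝ be differentiable on the open interval (−a, a), with g((−a,a)) ⊆ (−a,a), satisfying g(x) = −λ·g(g(−x/λ)) for all x ∈ (−a,a). Suppose E > 0 and E′ > 0 are constants such that |g′(y)| ≥ E for every y with 1/λ ≤ |y| ≤ 1 and |g′(y)| ≤ E′ for every y ∈ [−1,1]. Define T : ℝ → ℝ by T(y) = −λ·g(y). Then for every integer j ≥ 0 and every x with λ^{−(j+1)} ≤ |x| ≤ λ^{−j}, the map T^{j} ∘ g is differentiable at x and E·λ^{j} ≤ |(T^{j} ∘ g)′(x)| ≤ E′·λ^{j}. -/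
/-- derivative estimate for the rescaled return maps
`T^[j] ∘ g`, where `T y = -λ g y`: on `λ^{-(j+1)} ≤ |x| ≤ λ^{-j}` the map
`T^[j] ∘ g` is differentiable and `E λ^j ≤ |(T^[j] ∘ g)'(x)| ≤ E' λ^j`. -/
theorem feigenbaum_rescaled_derivative_estimate
    (a lam : ℝ) (ha : 1 < a) (hlam : 1 < lam) (g : ℝ → ℝ)
    (hdiff : ∀ x ∈ Set.Ioo (-a) a, DifferentiableAt ℝ g x)
    (hmaps : ∀ x ∈ Set.Ioo (-a) a, g x ∈ Set.Ioo (-a) a)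
    (hfe : ∀ x ∈ Set.Ioo (-a) a, g x = -lam * g (g (-x / lam)))
    (E E' : ℝ) (hE0 : 0 < E) (hE'0 : 0 < E')
    (hE : ∀ y : ℝ, 1 / lam ≤ |y| → |y| ≤ 1 → E ≤ |deriv g y|)
    (hE' : ∀ y ∈ Set.Icc (-1 : ℝ) 1, |deriv g y| ≤ E')
    (j : ℕ) (x : ℝ) (hx1 : lam⁻¹ ^ (j + 1) ≤ |x|) (hx2 : |x| ≤ lam⁻¹ ^ j) :
    DifferentiableAt ℝ ((fun y : ℝ => -lam * g y)^[j] ∘ g) x ∧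
      E * lam ^ j ≤ |deriv ((fun y : ℝ => -lam * g y)^[j] ∘ g) x| ∧
      |deriv ((fun y : ℝ => -lam * g y)^[j] ∘ g) x| ≤ E' * lam ^ j := by
  have hlam0 : (0:ℝ) < lam := lt_trans one_pos hlam
  have hlamne : lam ≠ 0 := ne_of_gt hlam0
  have ha0 : (0:ℝ) < a := lt_trans one_pos ha
  -- key conjugacy identity
  have key : ∀ n : ℕ, ∀ y : ℝ, |y| < a * lam⁻¹ ^ n →
      (fun y : ℝ => -lam * g y)^[n] (g y) = g ((-lam) ^ n * y) := by
    intro n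
    induction n with
    | zero => intro y hy; simp
    | succ n ih =>
      intro y hy
      have hstep : lam * (a * lam⁻¹ ^ (n + 1)) = a * lam⁻¹ ^ n := by
        rw [pow_succ]; field_simp
      have hy' : |(-lam) * y| < a * lam⁻¹ ^ n := by
        rw [abs_mul, abs_neg, abs_of_pos hlam0, ← hstep]
        exact (mul_lt_mul_iff_right₀ hlam0).2 hy
      have hmem : (-lam) * y ∈ Set.Ioo (-a) a := by
        have hle : a * lam⁻¹ ^ n ≤ a := by
          have : lam⁻¹ ^ n ≤ 1 := pow_le_one₀ (by positivity)
            (inv_le_one_of_one_le₀ (le_of_lt hlam))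
          nlinarith
        have := lt_of_lt_of_le hy' hle
        constructor <;> [linarith [abs_lt.1 this]; linarith [abs_lt.1 this]]
      have hfe' : g ((-lam) * y) = -lam * g (g y) := by
        have := hfe _ hmem
        rwa [show -(-lam * y) / lam = y by field_simp] at this
      rw [Function.iterate_succ_apply]
      show (fun y : ℝ => -lam * g y)^[n] (-lam * g (g y)) = _
      rw [← hfe', ih _ hy']
      ring_nf
  -- x is in the open region where the identity holds
  have hxlt : |x| < a * lam⁻¹ ^ j := by
    have : (1:ℝ) * lam⁻¹ ^ j < a * lam⁻¹ ^ j := by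
      have : (0:ℝ) < lam⁻¹ ^ j := by positivity
      nlinarith
    linarith [hx2]
  -- eventual equality near x
  have hev : ((fun y : ℝ => -lam * g y)^[j] ∘ g) =ᶠ[nhds x]
      fun y => g ((-lam) ^ j * y) := by
    have hopen : ∀ᶠ y in nhds x, |y| < a * lam⁻¹ ^ j := by
      have hc : ContinuousAt (fun y : ℝ => |y|) x := continuous_abs.continuousAt
      exact hc.eventually_lt continuousAt_const hxlt
    filter_upwards [hopen] with y hy
    exact key j y hy
  set c : ℝ := (-lam) ^ j with hc
  have habsc : |c| = lam ^ j := by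
    rw [hc, abs_pow, abs_neg, abs_of_pos hlam0]
  have hid : lam ^ j * lam⁻¹ ^ j = 1 := by
    rw [← mul_pow, mul_inv_cancel₀ hlamne, one_pow]
  have habscx : |c * x| = lam ^ j * |x| := by rw [abs_mul, habsc]
  have hcx_le1 : |c * x| ≤ 1 := by
    rw [habscx, ← hid]
    exact mul_le_mul_of_nonneg_left hx2 (by positivity)
  have hcx_ge : lam⁻¹ ≤ |c * x| := by
    rw [habscx]
    calc lam⁻¹ = lam ^ j * lam⁻¹ ^ (j + 1) := by
          rw [pow_succ, ← mul_assoc, hid, one_mul]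
      _ ≤ lam ^ j * |x| := mul_le_mul_of_nonneg_left hx1 (by positivity)
  have hcxmem : c * x ∈ Set.Ioo (-a) a := by
    have h1 : |c * x| < a := lt_of_le_of_lt hcx_le1 ha
    constructor <;> [linarith [abs_lt.1 h1]; linarith [abs_lt.1 h1]]
  have hgd : DifferentiableAt ℝ g (c * x) := hdiff _ hcxmem
  have hcomp : HasDerivAt (fun y : ℝ => g (c * y)) (deriv g (c * x) * c) x := by
    have h1 : HasDerivAt (fun y : ℝ => c * y) c x := by
      simpa using (hasDerivAt_id x).const_mul c
    exact hgd.hasDerivAt.comp x h1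
  have hdiff2 : DifferentiableAt ℝ ((fun y : ℝ => -lam * g y)^[j] ∘ g) x := by
    rw [hev.differentiableAt_iff]
    exact hcomp.differentiableAt
  have hderiv : deriv ((fun y : ℝ => -lam * g y)^[j] ∘ g) x = deriv g (c * x) * c := by
    rw [hev.deriv_eq]
    exact hcomp.deriv
  have habsderiv : |deriv ((fun y : ℝ => -lam * g y)^[j] ∘ g) x|
      = |deriv g (c * x)| * lam ^ j := by
    rw [hderiv, abs_mul, habsc]
  refine ⟨hdiff2, ?_, ?_⟩
  · rw [habsderiv]
    have := hE (c * x) (by rwa [one_div]) hcx_le1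
    exact mul_le_mul_of_nonneg_right this (by positivity)
  · rw [habsderiv]
    have hmem1 : c * x ∈ Set.Icc (-1:ℝ) 1 := abs_le.1 hcx_le1
    exact mul_le_mul_of_nonneg_right (hE' _ hmem1) (by positivity)
end

section
/- For each n ∈ ℕ let Y_n be a complete metric space with metric d, let X_n ⊆ Y_n be a closed subset, and let f_n : Y_n → Y_{n+1} be a map which is continuous on X_n, maps X_n onto Y_{n+1}, and is uniformly expanding on X_n: there is a constant L > 1 (independent of n) with d(f_n(a), f_n(b)) ≥ L·d(a,b) for all a, b ∈ X_n. Let ε > 0 and let (x_n)_{n∈ℕ} be an ε-orbit, i.e. x_n ∈ X_n and d(x_{n+1}, f_n(x_n)) < ε for all n. Then there exists a unique sequence (u_n)_{n∈ℕ} with u_n ∈ X_n and u_{n+1} = f_n(u_n) for all n, such that d(x_n, u_n) ≤ ε/(L−1) for all n. -/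
/-- shadowing theorem for non-autonomous systems: a uniformly
expanding non-autonomous system of maps between complete metric spaces has a
unique orbit `ε/(L-1)`-shadowing any given `ε`-orbit. -/
theorem nonautonomous_shadowing
    (Y : ℕ → Type*) [∀ n, MetricSpace (Y n)] [∀ n, CompleteSpace (Y n)]
    (X : ∀ n, Set (Y n)) (hXcl : ∀ n, IsClosed (X n))
    (f : ∀ n, Y n → Y (n + 1))
    (hcont : ∀ n, ContinuousOn (f n) (X n))
    (hsurj : ∀ n, Set.SurjOn (f n) (X n) (Set.univ : Set (Y (n + 1))))
    (L : ℝ) (hL : 1 < L)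
    (hexp : ∀ n, ∀ a ∈ X n, ∀ b ∈ X n, L * dist a b ≤ dist (f n a) (f n b))
    (ε : ℝ) (hε : 0 < ε)
    (x : ∀ n, Y n) (hx : ∀ n, x n ∈ X n)
    (hεorb : ∀ n, dist (x (n + 1)) (f n (x n)) < ε) :
    ∃! u : ∀ n, Y n, (∀ n, u n ∈ X n) ∧ (∀ n, f n (u n) = u (n + 1)) ∧
      ∀ n, dist (x n) (u n) ≤ ε / (L - 1) := by
  classical
  have hLpos : (0:ℝ) < L := lt_trans one_pos hL
  have hL1 : (0:ℝ) < L - 1 := sub_pos.2 hL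
  have hinv : (1:ℝ)/L < 1 := by
    rw [div_lt_one hLpos]; exact hL
  have hinvpos : (0:ℝ) < 1/L := by positivity
  -- inverse branches
  choose g hgX hgf using fun n (y : Y (n+1)) => hsurj n (Set.mem_univ y)
  -- pull-back sequences
  let Q : ℕ → ∀ n, Y n := fun k => Nat.rec x (fun _ q => fun n => g n (q (n+1))) k
  have hQ0 : ∀ n, Q 0 n = x n := fun _ => rfl
  have hQs : ∀ k n, Q (k+1) n = g n (Q k (n+1)) := fun _ _ => rfl
  have hQX : ∀ k n, Q k n ∈ X n := by
    intro k
    induction k with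
    | zero => exact hx
    | succ k ih => intro n; exact hgX n (Q k (n+1))
  -- key geometric estimate
  have key : ∀ k n, dist (Q k n) (Q (k+1) n) ≤ (ε / L) * (1/L)^k := by
    intro k
    induction k with
    | zero =>
      intro n
      have h1 : L * dist (g n (x (n+1))) (x n) ≤ dist (x (n+1)) (f n (x n)) := by
        have := hexp n _ (hgX n (x (n+1))) _ (hx n)
        rwa [hgf n (x (n+1))] at this
      have h2 : L * dist (g n (x (n+1))) (x n) ≤ ε := h1.trans (hεorb n).le
      have : dist (g n (x (n+1))) (x n) ≤ ε / L := by
        rw [le_div_iff₀ hLpos]; linarith [h2]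
      simpa [hQ0, hQs, dist_comm, mul_comm] using this
    | succ k ih =>
      intro n
      have h1 : L * dist (g n (Q k (n+1))) (g n (Q (k+1) (n+1)))
          ≤ dist (Q k (n+1)) (Q (k+1) (n+1)) := by
        have := hexp n _ (hgX n (Q k (n+1))) _ (hgX n (Q (k+1) (n+1)))
        rwa [hgf, hgf] at this
      have h2 : L * dist (g n (Q k (n+1))) (g n (Q (k+1) (n+1)))
          ≤ (ε / L) * (1/L)^k := h1.trans (ih (n+1))
      have hd : dist (g n (Q k (n+1))) (g n (Q (k+1) (n+1)))
          ≤ ((ε / L) * (1/L)^k) / L := by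
        rw [le_div_iff₀ hLpos]; nlinarith [h2, dist_nonneg (x := g n (Q k (n+1))) (y := g n (Q (k+1) (n+1)))]
      have : dist (g n (Q k (n+1))) (g n (Q (k+1) (n+1)))
          ≤ (ε / L) * (1/L)^(k+1) := by
        refine hd.trans (le_of_eq ?_)
        field_simp
        rw [pow_succ, ← mul_assoc, mul_comm L, mul_assoc, one_div, mul_inv_cancel₀ hLpos.ne', mul_one]
      simpa [hQs] using this
  -- Cauchy and limits
  have hcau : ∀ n, CauchySeq (fun k => Q k n) := fun n =>
    cauchySeq_of_le_geometric (1/L) (ε/L) hinv (fun k => key k n)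
  have hlim : ∀ n, ∃ y, Filter.Tendsto (fun k => Q k n) Filter.atTop (nhds y) :=
    fun n => cauchySeq_tendsto_of_complete (hcau n)
  choose u hu using hlim
  have huX : ∀ n, u n ∈ X n := fun n =>
    (hXcl n).mem_of_tendsto (hu n) (Filter.Eventually.of_forall (fun k => hQX k n))
  have horb : ∀ n, f n (u n) = u (n+1) := by
    intro n
    have htw : Filter.Tendsto (fun k => Q k n) Filter.atTop (nhdsWithin (u n) (X n)) := by
      rw [tendsto_nhdsWithin_iff]
      exact ⟨hu n, Filter.Eventually.of_forall (fun k => hQX k n)⟩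
    have h1 : Filter.Tendsto (fun k => f n (Q k n)) Filter.atTop (nhds (f n (u n))) :=
      ((hcont n (u n) (huX n)).tendsto).comp htw
    have h2 : Filter.Tendsto (fun k => f n (Q (k+1) n)) Filter.atTop (nhds (f n (u n))) :=
      h1.comp (Filter.tendsto_add_atTop_nat 1)
    have h3 : (fun k => f n (Q (k+1) n)) = fun k => Q k (n+1) := by
      funext k
      rw [hQs, hgf]
    rw [h3] at h2
    exact tendsto_nhds_unique h2 (hu (n+1))
  have hdist : ∀ n, dist (x n) (u n) ≤ ε / (L - 1) := by
    intro n
    have := dist_le_of_le_geometric_of_tendsto₀ (1/L) (ε/L) hinv (fun k => key k n) (hu n)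
    have heq : (ε/L) / (1 - 1/L) = ε / (L - 1) := by
      have h0 : (0:ℝ) < 1 - 1/L := by linarith
      field_simp
    rwa [heq] at this
  refine ⟨u, ⟨huX, horb, hdist⟩, ?_⟩
  rintro v ⟨hvX, hvorb, hvdist⟩
  funext n
  -- show dist (v n) (u n) = 0
  have grow : ∀ k n, dist (v n) (u n) * L^k ≤ dist (v (n+k)) (u (n+k)) := by
    intro k
    induction k with
    | zero => intro n; simp
    | succ k ih =>
      intro n
      have h1 : L * dist (v (n+k)) (u (n+k)) ≤ dist (v (n+k+1)) (u (n+k+1)) := by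
        have := hexp (n+k) _ (hvX (n+k)) _ (huX (n+k))
        rwa [hvorb (n+k), horb (n+k)] at this
      calc dist (v n) (u n) * L^(k+1) = (dist (v n) (u n) * L^k) * L := by ring
        _ ≤ dist (v (n+k)) (u (n+k)) * L := by
            exact mul_le_mul_of_nonneg_right (ih n) hLpos.le
        _ = L * dist (v (n+k)) (u (n+k)) := by ring
        _ ≤ dist (v (n+k+1)) (u (n+k+1)) := h1
  have hbound : ∀ k, dist (v n) (u n) ≤ (2 * (ε / (L-1))) * (1/L)^k := by
    intro k
    have h1 : dist (v (n+k)) (u (n+k)) ≤ 2 * (ε / (L-1)) := by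
      calc dist (v (n+k)) (u (n+k)) ≤ dist (v (n+k)) (x (n+k)) + dist (x (n+k)) (u (n+k)) :=
            dist_triangle (v (n+k)) (x (n+k)) (u (n+k))
        _ ≤ ε / (L-1) + ε / (L-1) := by
            have := hvdist (n+k)
            rw [dist_comm] at this
            exact add_le_add this (hdist (n+k))
        _ = 2 * (ε / (L-1)) := by ring
    have h2 := (grow k n).trans h1
    have hLk : (0:ℝ) < L^k := pow_pos hLpos k
    rw [one_div, inv_pow, ← div_eq_mul_inv]
    rw [le_div_iff₀ hLk]
    linarith [h2]
  have hzero : dist (v n) (u n) ≤ 0 := by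
    have htend : Filter.Tendsto (fun k => (2 * (ε / (L-1))) * (1/L)^k)
        Filter.atTop (nhds 0) := by
      have := tendsto_pow_atTop_nhds_zero_of_lt_one hinvpos.le hinv
      simpa using this.const_mul (2 * (ε / (L-1)))
    exact ge_of_tendsto htend (Filter.Eventually.of_forall hbound)
  exact dist_eq_zero.mp (le_antisymm hzero dist_nonneg)
end

section
/- Let E, m, M, L > 0 be reals, let R = [x₀, x₀+L] × [y₁, y₁+L] ⊆ ℝ × ℝ be a square, and let h : ℝ × ℝ → ℝ be differentiable on an open set containing R with |∂h/∂x(p)| ≤ E and −M ≤ ∂h/∂y(p) ≤ −m for every p ∈ R. Define F : ℝ × ℝ → ℝ × ℝ by F(x,y) = (h(x,y), x). Then for every real b with 0 < b < 1/(1+2E) and b·M ≤ 1, there exists a square I′ ⊆ F(R) whose side length is at least b·m·L. -/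
/-- `S` is a (closed, axis-parallel) square with side length `t`. -/
def IsSquareSide (t : ℝ) (S : Set (ℝ × ℝ)) : Prop :=
  0 ≤ t ∧ ∃ a b : ℝ, S = Set.Icc a (a + t) ×ˢ Set.Icc b (b + t)

/-- the image of a square of side `L` under a Hénon-like map
`F(x,y) = (h(x,y), x)`, with `|∂h/∂x| ≤ E` and `-M ≤ ∂h/∂y ≤ -m < 0` on the
square, contains a square of side at least `b·m·L` for every
`0 < b < 1/(1+2E)` with `b·M ≤ 1`. -/
theorem henon_image_contains_square
    (E m M L x₀ y₁ : ℝ) (hE : 0 < E) (hm : 0 < m) (hM : 0 < M) (hL : 0 < L)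
    (h : ℝ × ℝ → ℝ)
    (R : Set (ℝ × ℝ)) (hR : R = Set.Icc x₀ (x₀ + L) ×ˢ Set.Icc y₁ (y₁ + L))
    (U : Set (ℝ × ℝ)) (hU : IsOpen U) (hRU : R ⊆ U)
    (hdiff : ∀ p ∈ U, DifferentiableAt ℝ h p)
    (hdx : ∀ p ∈ R, |fderiv ℝ h p (1, 0)| ≤ E)
    (hdy : ∀ p ∈ R, fderiv ℝ h p (0, 1) ∈ Set.Icc (-M) (-m))
    (F : ℝ × ℝ → ℝ × ℝ) (hF : F = fun p => (h p, p.1))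
    (b : ℝ) (hb0 : 0 < b) (hb1 : b < 1 / (1 + 2 * E)) (hbM : b * M ≤ 1) :
    ∃ t : ℝ, b * m * L ≤ t ∧
      ∃ I' : Set (ℝ × ℝ), IsSquareSide t I' ∧ I' ⊆ F '' R := by
  have hsub : ∀ x y, x ∈ Set.Icc x₀ (x₀ + L) → y ∈ Set.Icc y₁ (y₁ + L) → (x, y) ∈ R := by
    intro x y hx hy; rw [hR]; exact ⟨hx, hy⟩
  -- differentiability of partial functions
  have hdiffY : ∀ x ∈ Set.Icc x₀ (x₀ + L), ∀ y ∈ Set.Icc y₁ (y₁ + L),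
      HasDerivAt (fun y => h (x, y)) (fderiv ℝ h (x, y) (0, 1)) y := by
    intro x hx y hy
    exact (hdiff (x, y) (hRU (hsub x y hx hy))).hasFDerivAt.comp_hasDerivAt y
      (HasDerivAt.prodMk (hasDerivAt_const y x) (hasDerivAt_id y))
  have hdiffX : ∀ x ∈ Set.Icc x₀ (x₀ + L), ∀ y ∈ Set.Icc y₁ (y₁ + L),
      HasDerivAt (fun x => h (x, y)) (fderiv ℝ h (x, y) (1, 0)) x := by
    intro x hx y hy
    exact (hdiff (x, y) (hRU (hsub x y hx hy))).hasFDerivAt.comp_hasDerivAt x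
      (HasDerivAt.prodMk (hasDerivAt_id x) (hasDerivAt_const x y))
  -- horizontal Lipschitz estimate
  have lipH : ∀ y ∈ Set.Icc y₁ (y₁ + L), ∀ x1 ∈ Set.Icc x₀ (x₀ + L),
      ∀ x2 ∈ Set.Icc x₀ (x₀ + L), |h (x2, y) - h (x1, y)| ≤ E * |x2 - x1| := by
    intro y hy x1 hx1 x2 hx2
    have := (convex_Icc x₀ (x₀ + L)).norm_image_sub_le_of_norm_hasDerivWithin_le
      (f := fun x => h (x, y)) (f' := fun x => fderiv ℝ h (x, y) (1, 0)) (C := E)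
      (fun x hx => (hdiffX x hx y hy).hasDerivWithinAt)
      (fun x hx => by rw [Real.norm_eq_abs]; exact hdx (x, y) (hsub x y hx hy)) hx1 hx2
    simpa [Real.norm_eq_abs] using this
  -- vertical decrease
  have vert : ∀ x ∈ Set.Icc x₀ (x₀ + L), m * L ≤ h (x, y₁) - h (x, y₁ + L) := by
    intro x hx
    have hanti : AntitoneOn (fun y => h (x, y) + m * y) (Set.Icc y₁ (y₁ + L)) := by
      apply antitoneOn_of_deriv_nonpos (convex_Icc _ _)
      · intro y hy
        exact (((hdiffY x hx y hy).differentiableAt.add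
          ((differentiableAt_id.const_mul m))).continuousAt).continuousWithinAt
      · intro y hy
        rw [interior_Icc] at hy
        exact ((hdiffY x hx y (Set.Ioo_subset_Icc_self hy)).differentiableAt.add
          ((differentiableAt_id.const_mul m))).differentiableWithinAt
      · intro y hy
        rw [interior_Icc] at hy
        have hy' : y ∈ Set.Icc y₁ (y₁ + L) := Set.Ioo_subset_Icc_self hy
        have hd : HasDerivAt (fun y => h (x, y) + m * y)
            (fderiv ℝ h (x, y) (0, 1) + m * 1) y :=
          (hdiffY x hx y hy').add ((hasDerivAt_id y).const_mul m)
        rw [hd.deriv]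
        have := (hdy (x, y) (hsub x y hx hy')).2
        linarith
    have h1 : y₁ ∈ Set.Icc y₁ (y₁ + L) := ⟨le_refl _, by linarith⟩
    have h2 : y₁ + L ∈ Set.Icc y₁ (y₁ + L) := ⟨by linarith, le_refl _⟩
    have := hanti h1 h2 (by linarith)
    simp only at this
    nlinarith
  -- intermediate value theorem
  have ivt : ∀ x ∈ Set.Icc x₀ (x₀ + L), Set.Icc (h (x, y₁ + L)) (h (x, y₁)) ⊆
      (fun y => h (x, y)) '' Set.Icc y₁ (y₁ + L) := by
    intro x hx
    exact intermediate_value_Icc' (by linarith)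
      (fun y hy => (hdiffY x hx y hy).differentiableAt.continuousAt.continuousWithinAt)
  -- numerics
  have hmM : m ≤ M := by
    have := hdy (x₀, y₁) (hsub x₀ y₁ ⟨le_refl _, by linarith⟩ ⟨le_refl _, by linarith⟩)
    have h1 := this.1; have h2 := this.2; linarith
  set s : ℝ := b * m * L with hs
  have hspos : 0 < s := by positivity
  have hsL : s ≤ L := by
    rw [hs]
    nlinarith [mul_le_mul_of_nonneg_left hmM hb0.le, mul_pos hb0 hm]
  have h2E : (0:ℝ) < 1 + 2 * E := by linarith
  have hb1' : b * (1 + 2 * E) < 1 := by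
    rw [lt_div_iff₀ h2E] at hb1; exact hb1
  have hkey : s * (1 + 2 * E) ≤ m * L := by
    rw [hs]; nlinarith [mul_pos hm hL]
  set c : ℝ := h (x₀, y₁ + L) + E * s with hc
  refine ⟨s, le_refl _, Set.Icc c (c + s) ×ˢ Set.Icc x₀ (x₀ + s),
    ⟨hspos.le, c, x₀, rfl⟩, ?_⟩
  rintro ⟨z, x⟩ ⟨hz, hx⟩
  have hxL : x ∈ Set.Icc x₀ (x₀ + L) := ⟨hx.1, by linarith [hx.2]⟩
  have hx0L : x₀ ∈ Set.Icc x₀ (x₀ + L) := ⟨le_refl _, by linarith⟩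
  have hyT : y₁ + L ∈ Set.Icc y₁ (y₁ + L) := ⟨by linarith, le_refl _⟩
  have hyB : y₁ ∈ Set.Icc y₁ (y₁ + L) := ⟨le_refl _, by linarith⟩
  have habs : |x - x₀| ≤ s := by
    rw [abs_le]; constructor <;> [linarith [hx.1, hspos]; linarith [hx.2]]
  have hEabs : E * |x - x₀| ≤ E * s := by
    exact mul_le_mul_of_nonneg_left habs hE.le
  have e1 := abs_le.mp (lipH (y₁ + L) hyT x₀ hx0L x hxL)
  have e2 := abs_le.mp (lipH y₁ hyB x₀ hx0L x hxL)
  have hv := vert x₀ hx0L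
  have b1 : h (x, y₁ + L) ≤ c := by
    have := e1.2; rw [hc]; linarith
  have b2 : c + s ≤ h (x, y₁) := by
    have := e2.1; rw [hc]; linarith
  obtain ⟨y, hy, hyz⟩ := ivt x hxL ⟨b1.trans hz.1, hz.2.trans b2⟩
  refine ⟨(x, y), hsub x y hxL hy, ?_⟩
  rw [hF]
  simp only at hyz ⊢
  rw [hyz]
end

section
/- Let E > 1 and η ≥ 0 be reals with E > 1 + 2η, let W > 0, let I = [x₁, x₁+W] × [y₁, y₁+W] ⊆ ℝ × ℝ be a square, and let h : ℝ × ℝ → ℝ be differentiable on an open set containing I with ∂h/∂x(p) ≤ −E and |∂h/∂y(p)| ≤ η for every p ∈ I. Let s : ℝ → ℝ be the affine map s(t) = α + β·t with β ≠ 0, and define φ : ℝ × ℝ → ℝ × ℝ by φ(x,y) = (s(h(x,y)), s(y)). Then there exists a square I′ ⊆ φ(I) with side length exactly |β|·W. -/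
/-- Preimage of a suitable interval of length `|β|·(d-c)` under `t ↦ α + β·t`
lands in `[c,d]`. -/
lemma affine_interval (α β c d : ℝ) (hβ : β ≠ 0) (hcd : c ≤ d) :
    ∃ a : ℝ, ∀ u ∈ Set.Icc a (a + |β| * (d - c)),
      (u - α) / β ∈ Set.Icc c d ∧ α + β * ((u - α) / β) = u := by
  rcases lt_or_gt_of_ne hβ with hneg | hpos
  · refine ⟨α + β * d, fun u hu => ?_⟩
    have habs : |β| = -β := abs_of_neg hneg
    rw [habs] at hu
    obtain ⟨h1, h2⟩ := hu
    constructor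
    · constructor
      · rw [le_div_iff_of_neg hneg]; nlinarith
      · rw [div_le_iff_of_neg hneg]; nlinarith
    · field_simp; ring
  · refine ⟨α + β * c, fun u hu => ?_⟩
    have habs : |β| = β := abs_of_pos hpos
    rw [habs] at hu
    obtain ⟨h1, h2⟩ := hu
    constructor
    · constructor
      · rw [le_div_iff₀ hpos]; nlinarith
      · rw [div_le_iff₀ hpos]; nlinarith
    · field_simp; ring

/-- the renormalization rescaling `φ(x,y) = (s(h(x,y)), s(y))`
of a square of side `W`, where `s(t) = α + β·t` is affine with `β ≠ 0`,
`∂h/∂x ≤ -E < -(1+2η)` and `|∂h/∂y| ≤ η` on the square, contains a square of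
side exactly `|β|·W`. -/
theorem rescaling_image_contains_square
    (E η W x₁ y₁ α β : ℝ) (hE : 1 < E) (hη : 0 ≤ η) (hEη : 1 + 2 * η < E)
    (hW : 0 < W) (hβ : β ≠ 0)
    (h : ℝ × ℝ → ℝ)
    (I : Set (ℝ × ℝ)) (hI : I = Set.Icc x₁ (x₁ + W) ×ˢ Set.Icc y₁ (y₁ + W))
    (U : Set (ℝ × ℝ)) (hU : IsOpen U) (hIU : I ⊆ U)
    (hdiff : ∀ p ∈ U, DifferentiableAt ℝ h p)
    (hdx : ∀ p ∈ I, fderiv ℝ h p (1, 0) ≤ -E)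
    (hdy : ∀ p ∈ I, |fderiv ℝ h p (0, 1)| ≤ η)
    (s : ℝ → ℝ) (hs : s = fun t => α + β * t)
    (φ : ℝ × ℝ → ℝ × ℝ) (hφ : φ = fun p => (s (h p), s p.2)) :
    ∃ I' : Set (ℝ × ℝ), IsSquareSide (|β| * W) I' ∧ I' ⊆ φ '' I := by
  have hxle : x₁ ≤ x₁ + W := by linarith
  have hyle : y₁ ≤ y₁ + W := by linarith
  have memI : ∀ x ∈ Set.Icc x₁ (x₁ + W), ∀ y ∈ Set.Icc y₁ (y₁ + W),
      ((x, y) : ℝ × ℝ) ∈ I := by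
    intro x hx y hy; rw [hI]; exact Set.mk_mem_prod hx hy
  -- derivative of vertical slices
  have hderY : ∀ x ∈ Set.Icc x₁ (x₁ + W), ∀ y ∈ Set.Icc y₁ (y₁ + W),
      HasDerivAt (fun y' => h (x, y')) (fderiv ℝ h (x, y) (0, 1)) y := by
    intro x hx y hy
    have hp : ((x, y) : ℝ × ℝ) ∈ U := hIU (memI x hx y hy)
    have hc : HasDerivAt (fun y' : ℝ => ((x, y') : ℝ × ℝ)) (0, 1) y :=
      (hasDerivAt_const y x).prodMk (hasDerivAt_id y)
    exact ((hdiff _ hp).hasFDerivAt).comp_hasDerivAt y hc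
  -- derivative of horizontal slices
  have hderX : ∀ x ∈ Set.Icc x₁ (x₁ + W), ∀ y ∈ Set.Icc y₁ (y₁ + W),
      HasDerivAt (fun x' => h (x', y)) (fderiv ℝ h (x, y) (1, 0)) x := by
    intro x hx y hy
    have hp : ((x, y) : ℝ × ℝ) ∈ U := hIU (memI x hx y hy)
    have hc : HasDerivAt (fun x' : ℝ => ((x', y) : ℝ × ℝ)) (1, 0) x :=
      (hasDerivAt_id x).prodMk (hasDerivAt_const x y)
    exact ((hdiff _ hp).hasFDerivAt).comp_hasDerivAt x hc
  -- vertical variation bound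
  have vert : ∀ x ∈ Set.Icc x₁ (x₁ + W), ∀ y ∈ Set.Icc y₁ (y₁ + W),
      |h (x, y) - h (x, y₁)| ≤ η * W := by
    intro x hx y hy
    have key := norm_image_sub_le_of_norm_deriv_le_segment'
      (f := fun y' => h (x, y')) (f' := fun y' => fderiv ℝ h (x, y') (0, 1))
      (a := y₁) (b := y₁ + W) (C := η)
      (fun y' hy' => (hderY x hx y' hy').hasDerivWithinAt)
      (fun y' hy' => hdy _ (memI x hx y' (Set.Ico_subset_Icc_self hy')))
      y hy
    calc |h (x, y) - h (x, y₁)| ≤ η * (y - y₁) := key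
      _ ≤ η * W := by nlinarith [hy.1, hy.2]
  -- horizontal drop at y₁
  have drop : h (x₁ + W, y₁) ≤ h (x₁, y₁) - E * W := by
    set G : ℝ → ℝ := fun x => h (x, y₁) + E * x with hG
    have hy₁ : y₁ ∈ Set.Icc y₁ (y₁ + W) := Set.left_mem_Icc.2 hyle
    have hGder : ∀ x ∈ Set.Icc x₁ (x₁ + W),
        HasDerivAt G (fderiv ℝ h (x, y₁) (1, 0) + E) x := by
      intro x hx
      exact (hderX x hx y₁ hy₁).add ((hasDerivAt_id x).const_mul E |>.congr_deriv
        (by ring))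
    have hanti : AntitoneOn G (Set.Icc x₁ (x₁ + W)) := by
      apply antitoneOn_of_deriv_nonpos (convex_Icc _ _)
      · exact fun x hx => (hGder x hx).continuousAt.continuousWithinAt
      · intro x hx
        exact ((hGder x (interior_subset hx)).differentiableAt).differentiableWithinAt
      · intro x hx
        have hx' := interior_subset hx
        rw [(hGder x hx').deriv]
        have := hdx _ (memI x hx' y₁ hy₁)
        linarith
    have := hanti (Set.left_mem_Icc.2 hxle) (Set.right_mem_Icc.2 hxle) hxle
    simp only [hG] at this
    linarith
  set m := h (x₁ + W, y₁) + η * W with hm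
  -- the inner square of H(I)
  have inner : ∀ y ∈ Set.Icc y₁ (y₁ + W), ∀ z ∈ Set.Icc m (m + W),
      ∃ x ∈ Set.Icc x₁ (x₁ + W), h (x, y) = z := by
    intro y hy z hz
    have hA : h (x₁ + W, y) ≤ m := by
      have := vert (x₁ + W) (Set.right_mem_Icc.2 hxle) y hy
      have := abs_le.1 this
      simp only [hm]; linarith [this.2]
    have hB : m + W ≤ h (x₁, y) := by
      have := vert x₁ (Set.left_mem_Icc.2 hxle) y hy
      have h1 := abs_le.1 this
      simp only [hm]; nlinarith [h1.1]
    have hcont : ContinuousOn (fun x => h (x, y)) (Set.Icc x₁ (x₁ + W)) :=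
      fun x hx => (hderX x hx y hy).continuousAt.continuousWithinAt
    have := intermediate_value_Icc' hxle hcont
    have hmem : z ∈ Set.Icc (h (x₁ + W, y)) (h (x₁, y)) :=
      Set.Icc_subset_Icc hA hB hz
    obtain ⟨x, hx, hxz⟩ := this hmem
    exact ⟨x, hx, hxz⟩
  -- build the square
  obtain ⟨a, ha⟩ := affine_interval α β m (m + W) hβ (by linarith)
  obtain ⟨b, hb⟩ := affine_interval α β y₁ (y₁ + W) hβ (by linarith)
  have hside : ∀ c : ℝ, |β| * (c + W - c) = |β| * W := by intro c; ring_nf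
  refine ⟨Set.Icc a (a + |β| * W) ×ˢ Set.Icc b (b + |β| * W),
    ⟨by positivity, a, b, rfl⟩, ?_⟩
  rintro ⟨u, v⟩ ⟨hu, hv⟩
  simp only [Set.mem_Icc] at hu hv
  have hu' : u ∈ Set.Icc a (a + |β| * (m + W - m)) := by
    rw [hside]; exact hu
  have hv' : v ∈ Set.Icc b (b + |β| * (y₁ + W - y₁)) := by
    rw [hside]; exact hv
  obtain ⟨hzmem, hzeq⟩ := ha u hu'
  obtain ⟨hwmem, hweq⟩ := hb v hv'
  obtain ⟨x, hx, hxz⟩ := inner _ hwmem _ hzmem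
  refine ⟨(x, (v - α) / β), memI x hx _ hwmem, ?_⟩
  rw [hφ, hs]
  simp only [hxz, hzeq, hweq]
end

section
/- Let U = I₁ × I₂ ⊆ ℝ × ℝ be a product of two intervals and let h : ℝ × ℝ → ℝ be differentiable on an open set containing U, with constants E ≥ 0 and η ≥ 0 such that |∂h/∂x(p)| ≥ E and |∂h/∂y(p)| ≤ η for every p ∈ U. Define F : ℝ × ℝ → ℝ × ℝ by F(x,y) = (h(x,y), x). Then for every nonempty compact set J ⊆ U, l(F(J)) ≥ E·l(J) − η·h(J), where l and h denote horizontal and vertical size. -/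
/-- The horizontal size of a set in the plane. -/
noncomputable def horizontalSize (S : Set (ℝ × ℝ)) : ℝ :=
  sSup {d : ℝ | ∃ p ∈ S, ∃ q ∈ S, d = |p.1 - q.1|}

/-- The vertical size of a set in the plane. -/
noncomputable def verticalSize (S : Set (ℝ × ℝ)) : ℝ :=
  sSup {d : ℝ | ∃ p ∈ S, ∃ q ∈ S, d = |p.2 - q.2|}

/-- Exact mean value theorem on an unordered interval, allowing `a = b`. -/
lemma mvt_aux {g g' : ℝ → ℝ} {a b : ℝ}
    (hg : ∀ t ∈ Set.uIcc a b, HasDerivAt g (g' t) t) :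
    ∃ c ∈ Set.uIcc a b, g b - g a = g' c * (b - a) := by
  rcases lt_trichotomy a b with hab | hab | hab
  · have hIcc : Set.uIcc a b = Set.Icc a b := Set.uIcc_of_le hab.le
    have hc : ContinuousOn g (Set.Icc a b) := fun t ht =>
      ((hg t (hIcc ▸ ht)).continuousAt).continuousWithinAt
    obtain ⟨c, hc1, hc2⟩ := exists_hasDerivAt_eq_slope g g' hab hc
      (fun t ht => hg t (hIcc ▸ Set.Ioo_subset_Icc_self ht))
    refine ⟨c, hIcc ▸ Set.Ioo_subset_Icc_self hc1, ?_⟩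
    rw [eq_div_iff (sub_ne_zero.mpr hab.ne')] at hc2
    linarith [hc2]
  · exact ⟨a, Set.left_mem_uIcc, by rw [hab]; ring⟩
  · have hIcc : Set.uIcc a b = Set.Icc b a := Set.uIcc_of_ge hab.le
    have hc : ContinuousOn g (Set.Icc b a) := fun t ht =>
      ((hg t (hIcc ▸ ht)).continuousAt).continuousWithinAt
    obtain ⟨c, hc1, hc2⟩ := exists_hasDerivAt_eq_slope g g' hab hc
      (fun t ht => hg t (hIcc ▸ Set.Ioo_subset_Icc_self ht))
    refine ⟨c, hIcc ▸ Set.Ioo_subset_Icc_self hc1, ?_⟩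
    rw [eq_div_iff (sub_ne_zero.mpr hab.ne')] at hc2
    linarith [hc2]

/-- The set of coordinate gaps of a bounded set is bounded above. -/
lemma bdd_aux {S : Set (ℝ × ℝ)} (hS : Bornology.IsBounded S) (f : ℝ × ℝ → ℝ)
    (hf : ∀ p, |f p| ≤ ‖p‖) :
    BddAbove {d : ℝ | ∃ p ∈ S, ∃ q ∈ S, d = |f p - f q|} := by
  obtain ⟨r, hr⟩ := hS.exists_norm_le
  refine ⟨2 * r, ?_⟩
  rintro d ⟨p, hp, q, hq, rfl⟩
  calc |f p - f q| ≤ |f p| + |f q| := abs_sub _ _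
    _ ≤ ‖p‖ + ‖q‖ := add_le_add (hf p) (hf q)
    _ ≤ 2 * r := by linarith [hr p hp, hr q hq]

/-- expansion estimate: for a Hénon-like map
`F(x,y) = (h(x,y), x)` with `|∂h/∂x| ≥ E` and `|∂h/∂y| ≤ η` on a product of
intervals `U`, every nonempty compact `J ⊆ U` satisfies
`l(F(J)) ≥ E·l(J) − η·h(J)`. -/
theorem henon_horizontal_size_expansion
    (I₁ I₂ : Set ℝ) (hI₁ : Convex ℝ I₁) (hI₂ : Convex ℝ I₂)
    (U : Set (ℝ × ℝ)) (hUdef : U = I₁ ×ˢ I₂)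
    (h : ℝ × ℝ → ℝ)
    (V : Set (ℝ × ℝ)) (hV : IsOpen V) (hUV : U ⊆ V)
    (hdiff : ∀ p ∈ V, DifferentiableAt ℝ h p)
    (E η : ℝ) (hE : 0 ≤ E) (hη : 0 ≤ η)
    (hdx : ∀ p ∈ U, E ≤ |fderiv ℝ h p (1, 0)|)
    (hdy : ∀ p ∈ U, |fderiv ℝ h p (0, 1)| ≤ η)
    (F : ℝ × ℝ → ℝ × ℝ) (hF : F = fun p => (h p, p.1))
    (J : Set (ℝ × ℝ)) (hJU : J ⊆ U) (hJc : IsCompact J) (hJne : J.Nonempty) :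
    E * horizontalSize J - η * verticalSize J ≤ horizontalSize (F '' J) := by
  -- Pointwise key estimate via two mean value theorems.
  have key : ∀ p ∈ J, ∀ q ∈ J,
      E * |p.1 - q.1| ≤ |h p - h q| + η * |p.2 - q.2| := by
    intro p hp q hq
    have hpU : p ∈ I₁ ×ˢ I₂ := hUdef ▸ hJU hp
    have hqU : q ∈ I₁ ×ˢ I₂ := hUdef ▸ hJU hq
    have hI₁sub : Set.uIcc q.1 p.1 ⊆ I₁ :=
      hI₁.ordConnected.uIcc_subset hqU.1 hpU.1
    have hI₂sub : Set.uIcc p.2 q.2 ⊆ I₂ :=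
      hI₂.ordConnected.uIcc_subset hpU.2 hqU.2
    -- horizontal MVT at height p.2
    have hA : ∀ t ∈ Set.uIcc q.1 p.1,
        HasDerivAt (fun t => h (t, p.2)) (fderiv ℝ h (t, p.2) (1, 0)) t := by
      intro t ht
      have hmem : (t, p.2) ∈ U := by rw [hUdef]; exact ⟨hI₁sub ht, hpU.2⟩
      have hd := (hdiff _ (hUV hmem)).hasFDerivAt
      have hcurve : HasDerivAt (fun t : ℝ => ((t, p.2) : ℝ × ℝ)) (1, 0) t :=
        HasDerivAt.prodMk (hasDerivAt_id t) (hasDerivAt_const t p.2)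
      exact hd.comp_hasDerivAt t hcurve
    obtain ⟨c, hc, heq⟩ := mvt_aux hA
    have hcU : (c, p.2) ∈ U := by rw [hUdef]; exact ⟨hI₁sub hc, hpU.2⟩
    have h1 : E * |p.1 - q.1| ≤ |h (p.1, p.2) - h (q.1, p.2)| := by
      rw [heq, abs_mul]
      exact mul_le_mul_of_nonneg_right (hdx _ hcU) (abs_nonneg _)
    -- vertical MVT at abscissa q.1
    have hB : ∀ t ∈ Set.uIcc p.2 q.2,
        HasDerivAt (fun t => h (q.1, t)) (fderiv ℝ h (q.1, t) (0, 1)) t := by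
      intro t ht
      have hmem : (q.1, t) ∈ U := by rw [hUdef]; exact ⟨hqU.1, hI₂sub ht⟩
      have hd := (hdiff _ (hUV hmem)).hasFDerivAt
      have hcurve : HasDerivAt (fun t : ℝ => ((q.1, t) : ℝ × ℝ)) (0, 1) t :=
        HasDerivAt.prodMk (hasDerivAt_const t q.1) (hasDerivAt_id t)
      exact hd.comp_hasDerivAt t hcurve
    obtain ⟨c', hc', heq'⟩ := mvt_aux hB
    have hc'U : (q.1, c') ∈ U := by rw [hUdef]; exact ⟨hqU.1, hI₂sub hc'⟩
    have h2 : |h (q.1, q.2) - h (q.1, p.2)| ≤ η * |p.2 - q.2| := by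
      rw [heq', abs_mul, abs_sub_comm q.2 p.2]
      exact mul_le_mul_of_nonneg_right (hdy _ hc'U) (abs_nonneg _)
    have hpe : (p.1, p.2) = p := Prod.mk.eta
    have hqe : (q.1, q.2) = q := Prod.mk.eta
    rw [hpe] at h1
    rw [hqe] at h2
    have htri : |h p - h (q.1, p.2)| ≤ |h p - h q| + |h q - h (q.1, p.2)| :=
      abs_sub_le _ _ _
    have : |h q - h (q.1, p.2)| = |h q - h (q.1, p.2)| := rfl
    calc E * |p.1 - q.1| ≤ |h p - h (q.1, p.2)| := h1
      _ ≤ |h p - h q| + |h q - h (q.1, p.2)| := htri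
      _ ≤ |h p - h q| + η * |p.2 - q.2| := by linarith [h2]
  -- boundedness and nonnegativity facts
  have hJb := hJc.isBounded
  have hhcont : ContinuousOn h J := fun p hp =>
    (hdiff p (hUV (hJU hp))).continuousAt.continuousWithinAt
  have hFcont : ContinuousOn F J := by
    rw [hF]; exact hhcont.prodMk continuousOn_fst
  have hFJc : IsCompact (F '' J) := hJc.image_of_continuousOn hFcont
  have hFJb := hFJc.isBounded
  have hfst : ∀ p : ℝ × ℝ, |p.1| ≤ ‖p‖ := fun p => norm_fst_le p
  have hsnd : ∀ p : ℝ × ℝ, |p.2| ≤ ‖p‖ := fun p => norm_snd_le p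
  have bddF : BddAbove {d : ℝ | ∃ p ∈ F '' J, ∃ q ∈ F '' J, d = |p.1 - q.1|} :=
    bdd_aux hFJb Prod.fst hfst
  have bddV : BddAbove {d : ℝ | ∃ p ∈ J, ∃ q ∈ J, d = |p.2 - q.2|} :=
    bdd_aux hJb Prod.snd hsnd
  obtain ⟨p₀, hp₀⟩ := hJne
  have hHF0 : 0 ≤ horizontalSize (F '' J) :=
    le_csSup bddF ⟨F p₀, Set.mem_image_of_mem F hp₀, F p₀,
      Set.mem_image_of_mem F hp₀, by simp⟩
  have hVJ0 : 0 ≤ verticalSize J :=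
    le_csSup bddV ⟨p₀, hp₀, p₀, hp₀, by simp⟩
  have hboundH : ∀ p ∈ J, ∀ q ∈ J, |h p - h q| ≤ horizontalSize (F '' J) := by
    intro p hp q hq
    exact le_csSup bddF ⟨F p, Set.mem_image_of_mem F hp, F q,
      Set.mem_image_of_mem F hq, by simp [hF]⟩
  have hboundV : ∀ p ∈ J, ∀ q ∈ J, |p.2 - q.2| ≤ verticalSize J := by
    intro p hp q hq
    exact le_csSup bddV ⟨p, hp, q, hq, rfl⟩
  set C := horizontalSize (F '' J) + η * verticalSize J with hCdef
  have hC0 : 0 ≤ C := by positivity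
  have hCd : ∀ d ∈ {d : ℝ | ∃ p ∈ J, ∃ q ∈ J, d = |p.1 - q.1|}, E * d ≤ C := by
    rintro d ⟨p, hp, q, hq, rfl⟩
    calc E * |p.1 - q.1| ≤ |h p - h q| + η * |p.2 - q.2| := key p hp q hq
      _ ≤ horizontalSize (F '' J) + η * verticalSize J :=
        add_le_add (hboundH p hp q hq)
          (mul_le_mul_of_nonneg_left (hboundV p hp q hq) hη)
  have hmain : E * horizontalSize J ≤ C := by
    rcases eq_or_lt_of_le hE with hE0 | hEpos
    · rw [← hE0, zero_mul]; exact hC0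
    · have hsup : horizontalSize J ≤ C / E := by
        rw [horizontalSize]
        refine Real.sSup_le (fun d hd => ?_) (div_nonneg hC0 hE)
        rw [le_div_iff₀ hEpos, mul_comm]
        exact hCd d hd
      calc E * horizontalSize J ≤ E * (C / E) :=
            mul_le_mul_of_nonneg_left hsup hE
        _ = C := by field_simp
  have : 0 ≤ η * verticalSize J := by positivity
  linarith [hmain]
end

section
/- Let ε, ε′ ∈ (0,1), c > 0, E > 1, α > 0, l₀ > 0, l₀′ > 0 be reals and let m, m′ be reals. Assume: (i) E^{m′−1}·l₀′ ≤ 2c·√(ε′); (ii) ln l₀′ ≥ 2m·ln ε + ln l₀; (iii) ln ε′ ≤ ε^{−2α}·ln ε; and (iv) (1/4)·ε^{−2α} + (ln E + ln(2c))/(2·ln ε) ≥ ε^{−α}. Then m ≥ (ln E/(−2·ln ε))·m′ + ε^{−α} + (ln l₀)/(−2·ln ε). -/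
/-- arithmetic content of the Two Row Lemma: the time span `m`
in the good regions of row `j` is bounded below in terms of the time span `m'`
of row `j+1`, the perturbation sizes `ε, ε'` and the initial side `l₀`. -/
theorem two_row_lemma_arith
    (ε ε' c E α l₀ l₀' m m' : ℝ)
    (hε : ε ∈ Set.Ioo (0 : ℝ) 1) (hε' : ε' ∈ Set.Ioo (0 : ℝ) 1)
    (hc : 0 < c) (hE : 1 < E) (hα : 0 < α) (hl₀ : 0 < l₀) (hl₀' : 0 < l₀')
    (h1 : E ^ (m' - 1) * l₀' ≤ 2 * c * Real.sqrt ε')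
    (h2 : Real.log l₀' ≥ 2 * m * Real.log ε + Real.log l₀)
    (h3 : Real.log ε' ≤ ε ^ (-(2 * α)) * Real.log ε)
    (h4 : (1 / 4) * ε ^ (-(2 * α))
        + (Real.log E + Real.log (2 * c)) / (2 * Real.log ε) ≥ ε ^ (-α)) :
    m ≥ (Real.log E / (-2 * Real.log ε)) * m' + ε ^ (-α)
        + Real.log l₀ / (-2 * Real.log ε) := by
  obtain ⟨hε0, hε1⟩ := hε
  obtain ⟨hε'0, hε'1⟩ := hε'
  set L := Real.log ε with hLdef
  have hL : L < 0 := Real.log_neg hε0 hε1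
  have hLne : L ≠ 0 := ne_of_lt hL
  have hEpos : (0:ℝ) < E := lt_trans one_pos hE
  have hpow : (0:ℝ) < E ^ (m' - 1) := Real.rpow_pos_of_pos hEpos _
  -- log of (i)
  have hlog1 : (m' - 1) * Real.log E + Real.log l₀' ≤
      Real.log (2 * c) + (1/2) * Real.log ε' := by
    have hlhs : (0:ℝ) < E ^ (m' - 1) * l₀' := mul_pos hpow hl₀'
    have := Real.log_le_log hlhs h1
    rw [Real.log_mul (ne_of_gt hpow) (ne_of_gt hl₀'),
        Real.log_mul (by positivity) (by
          exact ne_of_gt (Real.sqrt_pos.mpr hε'0)),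
        Real.log_sqrt hε'0.le, Real.log_rpow hEpos] at this
    linarith
  -- (iv) multiplied by 2L < 0
  have h4' : (1/2) * ε ^ (-(2*α)) * L + (Real.log E + Real.log (2*c)) ≤
      2 * L * ε ^ (-α) := by
    have h2L : (2:ℝ) * L < 0 := by linarith
    have := mul_le_mul_of_nonpos_right h4 h2L.le
    rw [add_mul, div_mul_cancel₀ _ (ne_of_lt h2L)] at this
    nlinarith
  -- chain everything
  have key : 2 * m * L + Real.log l₀ ≤ 2 * L * ε ^ (-α) - m' * Real.log E := by
    have h3' : (1/2) * Real.log ε' ≤ (1/2) * (ε ^ (-(2*α)) * L) := by linarith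
    nlinarith [hlog1, h2, h3', h4']
  -- divide by -2L > 0
  have hneg : (0:ℝ) < -2 * L := by linarith
  rw [ge_iff_le]
  have hrw : Real.log E / (-2 * L) * m' + ε ^ (-α) + Real.log l₀ / (-2 * L)
      = (Real.log E * m' + (-2 * L) * ε ^ (-α) + Real.log l₀) / (-2 * L) := by
    field_simp
    ring
  rw [hrw, div_le_iff₀ hneg]
  nlinarith [key]
end

section
/- Let N ∈ ℕ, let E > 1 and α > 0 be reals, and let ε, m, L : ℕ → ℝ be sequences such that for all j ≤ N: 0 < ε_j < 1 and m_j ≥ 0; and for all j < N: (i) m_j ≥ (ln E/(−2·ln ε_j))·m_{j+1} + ε_j^{−α} + L_j/(−2·ln ε_j); (ii) L_{j+1} ≥ 2·m_j·ln ε_j + L_j; (iii) ln ε_{j+1} ≤ ε_j^{−2α}·ln ε_j; (iv) ε_j ≤ (ln E)/8; (v) α·ε_j^{−2α} − 2 ≥ α; and (vi) ln E ≤ −2·ln ε_{j+1}. Then for all natural numbers j and k with j + k < N, m_j ≥ 2^{k}·ε_j^{−α} + L_j/(−2·ln ε_j). -/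
/-- inductive lower bound on the time spans in the good regions:
iterating the Two Row Lemma gives `m_j ≥ 2^k · ε_j^{-α} + L_j / (-2 ln ε_j)`
for all `j + k < N`. -/
theorem good_region_time_span_lower_bound
    (N : ℕ) (E α : ℝ) (hE : 1 < E) (hα : 0 < α)
    (ε m L : ℕ → ℝ)
    (hpos : ∀ j ≤ N, 0 < ε j ∧ ε j < 1 ∧ 0 ≤ m j)
    (h1 : ∀ j < N, m j ≥ (Real.log E / (-2 * Real.log (ε j))) * m (j + 1)
        + ε j ^ (-α) + L j / (-2 * Real.log (ε j)))
    (h2 : ∀ j < N, L (j + 1) ≥ 2 * m j * Real.log (ε j) + L j)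
    (h3 : ∀ j < N, Real.log (ε (j + 1)) ≤ ε j ^ (-(2 * α)) * Real.log (ε j))
    (h4 : ∀ j < N, ε j ≤ Real.log E / 8)
    (h5 : ∀ j < N, α * ε j ^ (-(2 * α)) - 2 ≥ α)
    (h6 : ∀ j < N, Real.log E ≤ -2 * Real.log (ε (j + 1))) :
    ∀ j k : ℕ, j + k < N →
      m j ≥ (2 : ℝ) ^ k * ε j ^ (-α) + L j / (-2 * Real.log (ε j)) := by
  have hlE : 0 < Real.log E := Real.log_pos hE
  intro j k
  induction k generalizing j with
  | zero =>
    intro hjk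
    simp only [Nat.add_zero] at hjk
    obtain ⟨hx0, hx1, _⟩ := hpos j hjk.le
    obtain ⟨_, _, hm1⟩ := hpos (j + 1) hjk
    have hlx : Real.log (ε j) < 0 := Real.log_neg hx0 hx1
    have hD : 0 < -2 * Real.log (ε j) := by linarith
    have hc : 0 ≤ Real.log E / (-2 * Real.log (ε j)) * m (j + 1) :=
      mul_nonneg (le_of_lt (div_pos hlE hD)) hm1
    have hb := h1 j hjk
    simp only [pow_zero, one_mul]
    linarith
  | succ k ih =>
    intro hjk
    have hjN : j < N := by omega
    have hj1k : (j + 1) + k < N := by omega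
    obtain ⟨hx0, hx1, hmj⟩ := hpos j hjN.le
    obtain ⟨hy0, hy1, hm1⟩ := hpos (j + 1) (by omega)
    have hlx : Real.log (ε j) < 0 := Real.log_neg hx0 hx1
    have hly : Real.log (ε (j + 1)) < 0 := Real.log_neg hy0 hy1
    set x := ε j with hxdef
    set y := ε (j + 1) with hydef
    set t := -Real.log x with htdef
    set s := -Real.log y with hsdef
    have ht : 0 < t := by rw [htdef]; linarith
    have hs : 0 < s := by rw [hsdef]; linarith
    have hDt : -2 * Real.log x = 2 * t := by rw [htdef]; ring
    have hDs : -2 * Real.log y = 2 * s := by rw [hsdef]; ring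
    have hxα : (0 : ℝ) < x ^ (-α) := Real.rpow_pos_of_pos hx0 _
    have hxp : (0 : ℝ) < x ^ (-(2 * α)) := Real.rpow_pos_of_pos hx0 _
    have hxeq : x ^ (-α) = Real.exp (α * t) := by
      rw [Real.rpow_def_of_pos hx0, htdef]; ring_nf
    have hyeq : y ^ (-α) = Real.exp (α * s) := by
      rw [Real.rpow_def_of_pos hy0, hsdef]; ring_nf
    -- (iii) gives s ≥ x^(-2α) * t
    have h3' := h3 j hjN
    have hst : x ^ (-(2 * α)) * t ≤ s := by
      rw [htdef, hsdef]; linarith [h3']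
    -- (v) gives α * s ≥ (α + 2) * t
    have h5' := h5 j hjN
    have hαs : (α + 2) * t ≤ α * s := by
      have p1 := mul_le_mul_of_nonneg_right
        (by linarith : (α + 2) ≤ α * x ^ (-(2 * α))) ht.le
      have p2 := mul_le_mul_of_nonneg_left hst hα.le
      linarith [p1, p2]
    have hexpt : Real.exp t = x⁻¹ := by
      rw [htdef, Real.exp_neg, Real.exp_log hx0]
    have hkey1 : x ^ (-α) * (x⁻¹ * x⁻¹) ≤ y ^ (-α) := by
      have hm := Real.exp_le_exp.mpr hαs
      rw [show (α + 2) * t = α * t + t + t by ring, Real.exp_add, Real.exp_add,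
        hexpt, ← hxeq] at hm
      rw [hyeq]
      linarith [hm]
    -- log bound: t ≤ x⁻¹
    have hinv : (0 : ℝ) < x⁻¹ := inv_pos.mpr hx0
    have hlog_bound : t ≤ x⁻¹ := by
      have hlb := Real.log_le_sub_one_of_pos hinv
      rw [Real.log_inv] at hlb
      rw [htdef]; linarith
    have h4' := h4 j hjN
    have h8x : 8 * x ≤ Real.log E := by linarith
    have hxx : x * x⁻¹ = 1 := mul_inv_cancel₀ (ne_of_gt hx0)
    have hA : 8 * t ≤ Real.log E * (x⁻¹ * x⁻¹) := by
      have q1 := mul_le_mul_of_nonneg_right h8x (mul_nonneg hinv.le hinv.le)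
      have q2 : 8 * x * (x⁻¹ * x⁻¹) = 8 * x⁻¹ := by
        rw [show 8 * x * (x⁻¹ * x⁻¹) = 8 * (x * x⁻¹) * x⁻¹ by ring, hxx]; ring
      linarith [q1, q2.le, q2.symm.le]
    have hcpos : 0 < Real.log E / (2 * t) := div_pos hlE (by linarith)
    -- key inequality: (log E / (2t)) * y^(-α) ≥ 4 * x^(-α)
    have hc4 : 4 * x ^ (-α) ≤ Real.log E / (2 * t) * y ^ (-α) := by
      have step2 : 4 * x ^ (-α) ≤ Real.log E / (2 * t) * (x ^ (-α) * (x⁻¹ * x⁻¹)) := by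
        rw [div_mul_eq_mul_div, le_div_iff₀ (by linarith : (0:ℝ) < 2 * t)]
        have q3 := mul_le_mul_of_nonneg_left hA hxα.le
        linarith [q3]
      have step1 := mul_le_mul_of_nonneg_left hkey1 hcpos.le
      linarith [step1, step2]
    -- main recursion
    have hbound := h1 j hjN
    rw [hDt] at hbound ⊢
    have hih := ih (j + 1) hj1k
    rw [hDs] at hih
    have hcmul := mul_le_mul_of_nonneg_left hih hcpos.le
    rw [mul_add] at hcmul
    have h2k : (0 : ℝ) < 2 ^ k := by positivity
    have hprod : (0 : ℝ) < 2 ^ k * x ^ (-α) := mul_pos h2k hxα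
    have hterm1 : 2 ^ k * (4 * x ^ (-α)) ≤ Real.log E / (2 * t) * (2 ^ k * y ^ (-α)) := by
      have q4 := mul_le_mul_of_nonneg_left hc4 h2k.le
      linarith [q4]
    rw [pow_succ]
    rcases le_or_gt 0 (L (j + 1)) with hL | hL
    · have hLs : 0 ≤ Real.log E / (2 * t) * (L (j + 1) / (2 * s)) :=
        mul_nonneg hcpos.le (div_nonneg hL (by linarith))
      linarith [hbound, hcmul, hterm1, hLs, hprod]
    · have h6' := h6 j hjN
      rw [hDs] at h6'
      have hq : L (j + 1) / (2 * s) ≤ 0 :=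
        div_nonpos_of_nonpos_of_nonneg hL.le (by linarith)
      have e1 : L (j + 1) / (2 * s) * (2 * s) = L (j + 1) :=
        div_mul_cancel₀ _ (by positivity : (2 : ℝ) * s ≠ 0)
      have hstep : L (j + 1) ≤ L (j + 1) / (2 * s) * Real.log E := by
        have q5 := mul_le_mul_of_nonpos_left h6' hq
        linarith [q5, e1.le, e1.symm.le]
      have hterm2 : L (j + 1) / (2 * t) ≤ Real.log E / (2 * t) * (L (j + 1) / (2 * s)) := by
        have hd : L (j + 1) / (2 * t) ≤ (L (j + 1) / (2 * s) * Real.log E) / (2 * t) :=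
          (div_le_div_iff_of_pos_right (by linarith : (0:ℝ) < 2 * t)).mpr hstep
        have heq : (L (j + 1) / (2 * s) * Real.log E) / (2 * t)
            = Real.log E / (2 * t) * (L (j + 1) / (2 * s)) := by ring
        linarith [hd, heq.le, heq.symm.le]
      have h2' := h2 j hjN
      have hLdiv : -(m j) + L j / (2 * t) ≤ L (j + 1) / (2 * t) := by
        have hnum : -(2 * m j) * t + L j ≤ L (j + 1) := by
          rw [htdef]; linarith [h2']
        have hd := (div_le_div_iff_of_pos_right (by linarith : (0:ℝ) < 2 * t)).mpr hnum
        have heq : (-(2 * m j) * t + L j) / (2 * t) = -(m j) + L j / (2 * t) := by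
          field_simp
        linarith [hd, heq.le, heq.symm.le]
      linarith [hbound, hcmul, hterm1, hterm2, hLdiv, hprod]
end
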